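/- Fix α ∈ (0,1], x > c ≥ 1 and y ≤ c. The function g(t) = (t/(x − (1−t)y))^α is concave on (0,1); consequently g(λ) + g(1−λ) is increasing in λ on (0, 1/2]. -/

import Mathlib

open MeasureTheory ProbabilityTheory Real Finset

noncomputable section

variable {Ω : Type*} [MeasurableSpace Ω]

/-- `X ~ Pareto(α)` : cdf `1 - x^(-α)` for `x ≥ 1`. -/
def IsPareto (P : Measure Ω) (α : ℝ) (X : Ω → ℝ) : Prop :=
  Measurable X ∧ (∀ x : ℝ, 1 ≤ x → P {ω | x < X ω} = ENNReal.ofReal (x ^ (-α))) ∧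
    P {ω | X ω < 1} = 0

/-- the increasing rearrangement of a vector -/
def sortedVec {n : ℕ} (f : Fin n → ℝ) : Fin n → ℝ := f ∘ Tuple.sort f

/-- `MajorizedBy θ η` : `θ ⪯ η`, i.e. equal sums and the sum of the `k` smallest
components of `θ` is at least that of `η` for each `k`. -/
def MajorizedBy {n : ℕ} (θ η : Fin n → ℝ) : Prop :=
  (∑ i, θ i = ∑ i, η i) ∧
  ∀ k : ℕ, k ≤ n →
    ∑ i ∈ Finset.univ.filter (fun i : Fin n => (i : ℕ) < k), sortedVec η i ≤
    ∑ i ∈ Finset.univ.filter (fun i : Fin n => (i : ℕ) < k), sortedVec θ i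

/-- `t ↦ t / (a + b t)` is concave on `(0,1)` for `a > 0`, `b ≥ 0`. -/
lemma inner_concave (a b : ℝ) (ha : 0 < a) (hb : 0 ≤ b) :
    ConcaveOn ℝ (Set.Ioo (0:ℝ) 1) (fun t : ℝ => t / (a + b * t)) := by
  refine ⟨convex_Ioo _ _, fun u hu v hv p q hp hq hpq => ?_⟩
  simp only [smul_eq_mul]
  have hdu : 0 < a + b * u := by nlinarith [hu.1]
  have hdv : 0 < a + b * v := by nlinarith [hv.1]
  have hw0 : 0 ≤ p * u + q * v :=
    add_nonneg (mul_nonneg hp hu.1.le) (mul_nonneg hq hv.1.le)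
  have hdw : 0 < a + b * (p * u + q * v) := by nlinarith [mul_nonneg hb hw0]
  rw [mul_div_assoc', mul_div_assoc',
    div_add_div _ _ (ne_of_gt hdu) (ne_of_gt hdv), div_le_div_iff₀ (by positivity) hdw]
  have hq' : q = 1 - p := by linarith
  subst hq'
  nlinarith [mul_nonneg (mul_nonneg (mul_nonneg (mul_nonneg ha.le hb) hp) hq)
    (sq_nonneg (u - v))]

/-- For a concave `g` on `(0,1)`, `l ↦ g l + g (1 - l)` is monotone on `(0, 1/2]`. -/
lemma mono_of_concave (g : ℝ → ℝ) (hg : ConcaveOn ℝ (Set.Ioo (0:ℝ) 1) g) :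
    MonotoneOn (fun l : ℝ => g l + g (1 - l)) (Set.Ioc 0 (1 / 2 : ℝ)) := by
  intro l₁ h₁ l₂ h₂ hle
  rcases eq_or_lt_of_le hle with rfl | hlt
  · exact le_rfl
  have h₁' : l₁ < 1 / 2 := lt_of_lt_of_le hlt h₂.2
  have hD : (0:ℝ) < 1 - 2 * l₁ := by linarith
  set t : ℝ := (1 - l₁ - l₂) / (1 - 2 * l₁) with ht
  have ht0 : 0 ≤ t := by
    apply div_nonneg _ hD.le
    linarith [h₂.2]
  have ht1 : 0 ≤ 1 - t := by
    rw [sub_nonneg, ht, div_le_one hD]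
    linarith
  have hsum : t + (1 - t) = 1 := by ring
  have hmem₁ : l₁ ∈ Set.Ioo (0:ℝ) 1 := ⟨h₁.1, by linarith⟩
  have hmem₂ : (1 - l₁) ∈ Set.Ioo (0:ℝ) 1 := ⟨by linarith, by linarith [h₁.1]⟩
  have key₁ := hg.2 hmem₁ hmem₂ ht0 ht1 hsum
  have key₂ := hg.2 hmem₁ hmem₂ ht1 ht0 (by ring)
  simp only [smul_eq_mul] at key₁ key₂
  have htD : t * (1 - 2 * l₁) = 1 - l₁ - l₂ := by
    rw [ht]; exact div_mul_cancel₀ _ hD.ne'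
  have e₁ : t * l₁ + (1 - t) * (1 - l₁) = l₂ := by
    field_simp [ht]
    linear_combination -htD
  have e₂ : (1 - t) * l₁ + t * (1 - l₁) = 1 - l₂ := by
    field_simp [ht]
    linear_combination htD
  rw [e₁] at key₁
  rw [e₂] at key₂
  simp only
  linarith

theorem stmt_14 (α : ℝ) (hα0 : 0 < α) (hα1 : α ≤ 1)
    (c x y : ℝ) (hc : 1 ≤ c) (hx : c < x) (hy0 : 0 ≤ y) (hy : y ≤ c) :
    ConcaveOn ℝ (Set.Ioo 0 1) (fun t : ℝ => (t / (x - (1 - t) * y)) ^ α) ∧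
    MonotoneOn (fun l : ℝ =>
      (l / (x - (1 - l) * y)) ^ α + ((1 - l) / (x - l * y)) ^ α)
      (Set.Ioc 0 (1 / 2 : ℝ)) := by
  have ha : 0 < x - y := by linarith
  have hin := inner_concave (x - y) y ha hy0
  have hrw : ∀ t : ℝ, x - (1 - t) * y = (x - y) + y * t := by intro t; ring
  have hpos : ∀ t ∈ Set.Ioo (0:ℝ) 1, 0 ≤ t / ((x - y) + y * t) := by
    intro t ht
    have : 0 < (x - y) + y * t := by nlinarith [ht.1]
    exact div_nonneg ht.1.le this.le
  have hconc : ConcaveOn ℝ (Set.Ioo (0:ℝ) 1)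
      (fun t : ℝ => (t / (x - (1 - t) * y)) ^ α) := by
    refine ⟨convex_Ioo _ _, fun u hu v hv p q hp hq hpq => ?_⟩
    simp only [smul_eq_mul, hrw]
    set hu' := hpos u hu
    set hv' := hpos v hv
    have hw : p • u + q • v ∈ Set.Ioo (0:ℝ) 1 := (convex_Ioo _ _) hu hv hp hq hpq
    have hw' := hpos _ hw
    simp only [smul_eq_mul] at hw hw'
    have hmono : (p * (u / ((x - y) + y * u)) + q * (v / ((x - y) + y * v))) ^ α ≤
        ((p * u + q * v) / ((x - y) + y * (p * u + q * v))) ^ α := by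
      apply Real.rpow_le_rpow (by positivity)
      have := hin.2 hu hv hp hq hpq
      simpa only [smul_eq_mul] using this
      exact hα0.le
    refine le_trans ?_ hmono
    have := (Real.concaveOn_rpow hα0.le hα1).2 (Set.mem_Ici.2 hu') (Set.mem_Ici.2 hv')
      hp hq hpq
    simpa only [smul_eq_mul] using this
  refine ⟨hconc, ?_⟩
  have := mono_of_concave _ hconc
  have heq : (fun l : ℝ =>
      (l / (x - (1 - l) * y)) ^ α + ((1 - l) / (x - l * y)) ^ α) =
      (fun l : ℝ => (l / (x - (1 - l) * y)) ^ α +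
        ((1 - l) / (x - (1 - (1 - l)) * y)) ^ α) := by
    funext l; ring_nf
  rw [heq]
  exact this
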